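/- Let Q(x) = a·∏_{i=1}^{M} (x − r_i) with a ≠ 0 and r_1, …, r_M ∈ ℝ, let R ≥ 0, g ≥ 1, and x₀ ∈ [0,1). Assume: at least g of the roots (with multiplicity) satisfy |r_i| ≤ R; no root lies in the interval [x₀, 1]; and |Q(t)| ≤ 1 for all t ∈ [x₀, 1]. Set c = g/(1 + R)² and D = √((2/c)·log(1/|Q(1)|)) (well-defined since 0 < |Q(1)| ≤ 1). Then for every x ∈ [x₀, 1]: |Q(x)| ≤ exp( −(c/2) · (max(0, (1 − x) − D))² ). -/

import Mathlib

open Real Set Finset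


lemma logA {t : ℝ} (h0 : 0 < t) (h1 : t ≤ 1) :
    Real.log t ≤ (t - 1) - (t - 1) ^ 2 / 2 := by
  set F : ℝ → ℝ := fun s => (s - 1) - (s - 1) ^ 2 / 2 - Real.log s with hF
  have hder : ∀ s ∈ Set.Ioi (0:ℝ), HasDerivAt F (-(s-1)^2 / s) s := by
    intro s hs
    have hs0 : s ≠ 0 := ne_of_gt hs
    have h1 : HasDerivAt (fun t : ℝ => t - 1) 1 s := (hasDerivAt_id s).sub_const 1
    have h2 : HasDerivAt (fun t : ℝ => (t - 1) ^ 2 / 2) (s - 1) s := by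
      have h := (((hasDerivAt_id s).sub_const 1).pow 2).div_const 2
      refine h.congr_deriv ?_
      simp
    have h3 : HasDerivAt Real.log s⁻¹ s := Real.hasDerivAt_log hs0
    have h := (h1.sub h2).sub h3
    refine h.congr_deriv ?_
    field_simp
    ring
  have hmono : AntitoneOn F (Set.Ioi (0:ℝ)) := by
    apply antitoneOn_of_deriv_nonpos (convex_Ioi 0)
    · exact fun s hs => (hder s hs).continuousAt.continuousWithinAt
    · intro s hs
      rw [interior_Ioi] at hs
      exact (hder s hs).differentiableAt.differentiableWithinAt
    · intro s hs
      rw [interior_Ioi] at hs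
      rw [(hder s hs).deriv]
      apply div_nonpos_of_nonpos_of_nonneg
      · have := sq_nonneg (s - 1); nlinarith
      · exact le_of_lt hs
  have := hmono h0 (Set.mem_Ioi.mpr one_pos) h1
  simp only [hF, Real.log_one] at this
  linarith

lemma logB {t : ℝ} (h1 : (1:ℝ) ≤ t) :
    Real.log t ≤ (t - 1) - (1 - t⁻¹) ^ 2 / 2 := by
  set G : ℝ → ℝ := fun s => (s - 1) - (1 - s⁻¹) ^ 2 / 2 - Real.log s with hG
  have hder : ∀ s : ℝ, 0 < s → HasDerivAt G (1 - (1 - s⁻¹) * (s⁻¹)^2 - s⁻¹) s := by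
    intro s hs
    have hs0 : s ≠ 0 := ne_of_gt hs
    have h1 : HasDerivAt (fun t : ℝ => t - 1) 1 s := (hasDerivAt_id s).sub_const 1
    have hinv : HasDerivAt (fun t : ℝ => (1:ℝ) - t⁻¹) (s⁻¹^2) s := by
      have := (hasDerivAt_inv hs0).const_sub 1
      refine this.congr_deriv ?_
      field_simp
    have h2 : HasDerivAt (fun t : ℝ => (1 - t⁻¹) ^ 2 / 2) ((1 - s⁻¹) * (s⁻¹)^2) s := by
      have h := (hinv.pow 2).div_const 2
      refine h.congr_deriv ?_
      ring
    have h3 : HasDerivAt Real.log s⁻¹ s := Real.hasDerivAt_log hs0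
    exact (h1.sub h2).sub h3
  have hmono : MonotoneOn G (Set.Ici (1:ℝ)) := by
    apply monotoneOn_of_deriv_nonneg (convex_Ici 1)
    · intro s hs
      have : (0:ℝ) < s := lt_of_lt_of_le one_pos hs
      exact (hder s this).continuousAt.continuousWithinAt
    · intro s hs
      rw [interior_Ici] at hs
      exact (hder s (lt_trans one_pos hs)).differentiableAt.differentiableWithinAt
    · intro s hs
      rw [interior_Ici] at hs
      have hs0 : (0:ℝ) < s := lt_trans one_pos hs
      rw [(hder s hs0).deriv]
      have key : 1 - (1 - s⁻¹) * (s⁻¹)^2 - s⁻¹ = (s-1)^2 * (s+1) / s^3 := by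
        field_simp
        ring
      rw [key]
      positivity
  have := hmono (Set.mem_Ici.mpr le_rfl) (Set.mem_Ici.mpr h1) h1
  simp only [hG, Real.log_one, inv_one] at this
  linarith


lemma logW {p q : ℝ} (hp : 0 < p) (hq : 0 < q) :
    Real.log q ≤ Real.log p + (q - p) / p := by
  have h := Real.log_le_sub_one_of_pos (div_pos hq hp)
  rw [Real.log_div (ne_of_gt hq) (ne_of_gt hp)] at h
  have : q / p - 1 = (q - p) / p := by field_simp
  linarith [this ▸ h]

lemma logS {p q K : ℝ} (hp : 0 < p) (hq : 0 < q) (hpK : p ≤ K) (hqK : q ≤ K) :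
    Real.log q ≤ Real.log p + (q - p) / p - (q - p) ^ 2 / (2 * K ^ 2) := by
  have hK : 0 < K := lt_of_lt_of_le hp hpK
  rcases le_total q p with hle | hle
  · -- q ≤ p : use logA with t = q/p ≤ 1
    have ht0 : 0 < q / p := div_pos hq hp
    have ht1 : q / p ≤ 1 := (div_le_one hp).mpr hle
    have h := logA ht0 ht1
    rw [Real.log_div (ne_of_gt hq) (ne_of_gt hp)] at h
    have e1 : q / p - 1 = (q - p) / p := by field_simp
    rw [e1] at h
    have e2 : ((q - p) / p) ^ 2 / 2 = (q - p)^2 / (2 * p^2) := by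
      rw [div_pow]; ring
    rw [e2] at h
    have e3 : (q - p)^2 / (2 * K^2) ≤ (q - p)^2 / (2 * p^2) := by
      apply div_le_div_of_nonneg_left (sq_nonneg _) (by positivity)
      nlinarith
    linarith
  · -- p ≤ q : use logB with t = q/p ≥ 1
    have ht1 : (1:ℝ) ≤ q / p := (one_le_div hp).mpr hle
    have h := logB ht1
    rw [Real.log_div (ne_of_gt hq) (ne_of_gt hp)] at h
    have e1 : q / p - 1 = (q - p) / p := by field_simp
    have e2 : 1 - (q / p)⁻¹ = (q - p) / q := by
      rw [inv_div]; field_simp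
    rw [e1, e2] at h
    have e3 : ((q - p) / q) ^ 2 / 2 = (q - p)^2 / (2 * q^2) := by
      rw [div_pow]; ring
    rw [e3] at h
    have e4 : (q - p)^2 / (2 * K^2) ≤ (q - p)^2 / (2 * q^2) := by
      apply div_le_div_of_nonneg_left (sq_nonneg _) (by positivity)
      nlinarith
    linarith

-- per root, weak version
lemma rootW {x₀ u v rr : ℝ} (hrr : rr < x₀ ∨ 1 < rr)
    (hu : u ∈ Set.Icc x₀ 1) (hv : v ∈ Set.Icc x₀ 1) :
    Real.log |v - rr| ≤ Real.log |u - rr| + (v - u) / (u - rr) := by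
  rcases hrr with h | h
  · have hp : 0 < u - rr := by linarith [hu.1]
    have hq : 0 < v - rr := by linarith [hv.1]
    rw [abs_of_pos hp, abs_of_pos hq]
    have := logW hp hq
    have e : (v - rr - (u - rr)) / (u - rr) = (v - u) / (u - rr) := by ring_nf
    linarith [e ▸ this]
  · have hp : 0 < rr - u := by linarith [hu.2]
    have hq : 0 < rr - v := by linarith [hv.2]
    rw [abs_sub_comm v rr, abs_sub_comm u rr, abs_of_pos hp, abs_of_pos hq]
    have := logW hp hq
    have e : (rr - v - (rr - u)) / (rr - u) = (v - u) / (u - rr) := by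
      rw [div_eq_div_iff (by linarith) (sub_ne_zero.mpr (ne_of_gt (show u < rr from by linarith)).symm)]
      ring
    linarith [e ▸ this]

lemma rootS {x₀ u v rr R : ℝ} (hrr : rr < x₀ ∨ 1 < rr) (hx₀ : 0 ≤ x₀) (hRr : |rr| ≤ R)
    (hu : u ∈ Set.Icc x₀ 1) (hv : v ∈ Set.Icc x₀ 1) :
    Real.log |v - rr| ≤ Real.log |u - rr| + (v - u) / (u - rr)
      - (v - u) ^ 2 / (2 * (1 + R) ^ 2) := by
  obtain ⟨hrr1, hrr2⟩ := abs_le.mp hRr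
  have hu0 : 0 ≤ u := le_trans hx₀ hu.1
  have hv0 : 0 ≤ v := le_trans hx₀ hv.1
  rcases hrr with h | h
  · have hp : 0 < u - rr := by linarith [hu.1]
    have hq : 0 < v - rr := by linarith [hv.1]
    have hpK : u - rr ≤ 1 + R := by linarith [hu.2]
    have hqK : v - rr ≤ 1 + R := by linarith [hv.2]
    rw [abs_of_pos hp, abs_of_pos hq]
    have := logS hp hq hpK hqK
    have e : v - rr - (u - rr) = v - u := by ring
    rw [e] at this
    linarith
  · have hp : 0 < rr - u := by linarith [hu.2]
    have hq : 0 < rr - v := by linarith [hv.2]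
    have hpK : rr - u ≤ 1 + R := by linarith
    have hqK : rr - v ≤ 1 + R := by linarith
    rw [abs_sub_comm v rr, abs_sub_comm u rr, abs_of_pos hp, abs_of_pos hq]
    have := logS hp hq hpK hqK
    have e1 : rr - v - (rr - u) = -(v - u) := by ring
    rw [e1] at this
    have e2 : -(v - u) / (rr - u) = (v - u) / (u - rr) := by
      rw [div_eq_div_iff (by linarith) (sub_ne_zero.mpr (ne_of_gt (show u < rr from by linarith)).symm)]
      ring
    have e3 : (-(v - u))^2 = (v - u)^2 := by ring
    rw [e2, e3] at this
    exact this


theorem bounded_real_rooted_poly_decay (M : ℕ) (a : ℝ) (ha : a ≠ 0) (r : Fin M → ℝ)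
    (R : ℝ) (hR : 0 ≤ R) (g : ℕ) (hg : 1 ≤ g) (x₀ : ℝ) (hx₀ : x₀ ∈ Set.Ico (0 : ℝ) 1)
    (Q : ℝ → ℝ) (hQ : ∀ x, Q x = a * ∏ i, (x - r i))
    (hroots : g ≤ (Finset.univ.filter fun i => |r i| ≤ R).card)
    (hnoroots : ∀ i, r i ∉ Set.Icc x₀ 1)
    (hbound : ∀ t ∈ Set.Icc x₀ 1, |Q t| ≤ 1)
    (c D : ℝ) (hc : c = (g : ℝ) / (1 + R) ^ 2)
    (hD : D = Real.sqrt ((2 / c) * Real.log (1 / |Q 1|)))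
    (x : ℝ) (hx : x ∈ Set.Icc x₀ 1) :
    |Q x| ≤ Real.exp (-(c / 2) * (max 0 ((1 - x) - D)) ^ 2) := by
  have hK : (0:ℝ) < 1 + R := by linarith
  have hcpos : 0 < c := by
    rw [hc]
    apply div_pos _ (by positivity)
    exact_mod_cast Nat.lt_of_lt_of_le Nat.zero_lt_one hg
  have hsame : ∀ i, r i < x₀ ∨ 1 < r i := by
    intro i
    rcases lt_or_ge (r i) x₀ with h | h
    · exact Or.inl h
    · right
      by_contra h2
      push_neg at h2
      exact hnoroots i ⟨h, h2⟩
  have hne : ∀ (i : Fin M), ∀ u ∈ Set.Icc x₀ 1, u - r i ≠ 0 := by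
    intro i u hu
    rcases hsame i with h | h
    · have : r i < u := lt_of_lt_of_le h hu.1
      exact sub_ne_zero.mpr (ne_of_gt this)
    · have : u < r i := lt_of_le_of_lt hu.2 h
      exact sub_ne_zero.mpr (ne_of_lt this)
  have hQne : ∀ u ∈ Set.Icc x₀ 1, Q u ≠ 0 := by
    intro u hu
    rw [hQ u]
    exact mul_ne_zero ha (Finset.prod_ne_zero_iff.mpr (fun i _ => hne i u hu))
  have hlog : ∀ u ∈ Set.Icc x₀ 1,
      Real.log |Q u| = Real.log |a| + ∑ i, Real.log |u - r i| := by
    intro u hu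
    rw [hQ u, abs_mul, Finset.abs_prod,
      Real.log_mul (abs_ne_zero.mpr ha)
        (Finset.prod_ne_zero_iff.mpr (fun i _ => abs_ne_zero.mpr (hne i u hu))),
      Real.log_prod (fun i _ => abs_ne_zero.mpr (hne i u hu))]
  set T : ℝ → ℝ := fun u => ∑ i, (u - r i)⁻¹ with hT
  have key : ∀ u ∈ Set.Icc x₀ 1, ∀ v ∈ Set.Icc x₀ 1,
      Real.log |Q v| ≤ Real.log |Q u| + (v - u) * T u - c / 2 * (v - u) ^ 2 := by
    intro u hu v hv
    rw [hlog v hv, hlog u hu]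
    have hper : ∀ i : Fin M,
        Real.log |v - r i| ≤ Real.log |u - r i| + (v - u) / (u - r i)
          - (if |r i| ≤ R then (v - u) ^ 2 / (2 * (1 + R) ^ 2) else 0) := by
      intro i
      by_cases hri : |r i| ≤ R
      · simpa [hri] using rootS (hsame i) hx₀.1 hri hu hv
      · simpa [hri] using rootW (hsame i) hu hv
    have hsum := Finset.sum_le_sum (fun i (_ : i ∈ Finset.univ) => hper i)
    have e1 : ∑ i : Fin M, (Real.log |u - r i| + (v - u) / (u - r i)
          - (if |r i| ≤ R then (v - u) ^ 2 / (2 * (1 + R) ^ 2) else 0))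
        = (∑ i, Real.log |u - r i|) + (v - u) * T u
          - ((Finset.univ.filter fun i => |r i| ≤ R).card : ℝ)
              * ((v - u) ^ 2 / (2 * (1 + R) ^ 2)) := by
      rw [Finset.sum_sub_distrib, Finset.sum_add_distrib]
      congr 1
      · congr 1
        rw [hT, Finset.mul_sum]
        exact Finset.sum_congr rfl (fun i _ => by rw [div_eq_mul_inv])
      · rw [← Finset.sum_filter, Finset.sum_const, nsmul_eq_mul]
    rw [e1] at hsum
    have hq0 : (0:ℝ) ≤ (v - u) ^ 2 / (2 * (1 + R) ^ 2) := by positivity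
    have hcard : (g : ℝ) * ((v - u) ^ 2 / (2 * (1 + R) ^ 2))
        ≤ ((Finset.univ.filter fun i => |r i| ≤ R).card : ℝ)
            * ((v - u) ^ 2 / (2 * (1 + R) ^ 2)) := by
      apply mul_le_mul_of_nonneg_right _ hq0
      exact_mod_cast hroots
    have hcg : c / 2 * (v - u) ^ 2 = (g : ℝ) * ((v - u) ^ 2 / (2 * (1 + R) ^ 2)) := by
      rw [hc]
      field_simp
    linarith
  -- setup constants
  have hx1 : (1:ℝ) ∈ Set.Icc x₀ 1 := ⟨le_of_lt hx₀.2, le_rfl⟩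
  have hQ1pos : 0 < |Q 1| := abs_pos.mpr (hQne 1 hx1)
  have hQ1le : |Q 1| ≤ 1 := hbound 1 hx1
  set L : ℝ := Real.log (1 / |Q 1|) with hLdef
  have hL0 : 0 ≤ L := Real.log_nonneg (by rw [le_div_iff₀ hQ1pos]; simpa using hQ1le)
  have hlogQ1 : Real.log |Q 1| = -L := by
    rw [hLdef, one_div, Real.log_inv]; ring
  have hD0 : 0 ≤ D := hD ▸ Real.sqrt_nonneg _
  have hD2 : c / 2 * D ^ 2 = L := by
    rw [hD, sq, Real.mul_self_sqrt (by positivity)]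
    field_simp
  have hs0 : 0 ≤ 1 - x := by linarith [hx.2]
  have hfx : Real.log |Q x| ≤ 0 := Real.log_nonpos (abs_nonneg _) (hbound x hx)
  rw [← Real.exp_log (abs_pos.mpr (hQne x hx))]
  apply Real.exp_le_exp.mpr
  -- goal : log |Q x| ≤ -(c/2) * (max 0 ((1-x) - D))^2
  rcases le_or_gt 0 (T 1) with hT1 | hT1
  · -- case A
    have h := key 1 hx1 x hx
    rw [hlogQ1] at h
    have h2 : (x - 1) * T 1 ≤ 0 :=
      mul_nonpos_iff.mpr (Or.inr ⟨by linarith [hx.2], hT1⟩)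
    have hsq : (x - 1) ^ 2 = (1 - x) ^ 2 := by ring
    have hmax : max 0 ((1 - x) - D) ≤ 1 - x := max_le hs0 (by linarith)
    have hmax2 : (max 0 ((1 - x) - D)) ^ 2 ≤ (1 - x) ^ 2 :=
      pow_le_pow_left₀ (le_max_left 0 _) hmax 2
    have hstep : c / 2 * (max 0 ((1 - x) - D)) ^ 2 ≤ c / 2 * (1 - x) ^ 2 :=
      mul_le_mul_of_nonneg_left hmax2 (le_of_lt (half_pos hcpos))
    have hsq' : c / 2 * (x - 1) ^ 2 = c / 2 * (1 - x) ^ 2 := by ring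
    linarith
  · rcases le_or_gt (T x) 0 with hTx | hTx
    · -- case B
      have h := key x hx 1 hx1
      rw [hlogQ1] at h
      have h2 : (1 - x) * T x ≤ 0 :=
        mul_nonpos_iff.mpr (Or.inl ⟨hs0, hTx⟩)
      have hsq2 : c / 2 * (1 - x) ^ 2 ≤ c / 2 * D ^ 2 := by
        rw [hD2]; linarith
      have hsq3 : (1 - x) ^ 2 ≤ D ^ 2 :=
        le_of_mul_le_mul_left (by linarith) (half_pos hcpos)
      have hsD : 1 - x ≤ D := by
        have := Real.sqrt_le_sqrt hsq3
        rwa [Real.sqrt_sq hs0, Real.sqrt_sq hD0] at this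
      have hmax : max 0 ((1 - x) - D) = 0 := max_eq_left (by linarith)
      rw [hmax]
      simpa using hfx
    · -- case C : T 1 < 0 < T x, IVT
      have hxle1 : x ≤ 1 := hx.2
      have hsub : Set.Icc x 1 ⊆ Set.Icc x₀ 1 :=
        Set.Icc_subset_Icc hx.1 le_rfl
      have Tcont : ContinuousOn T (Set.Icc x 1) := by
        apply continuousOn_finset_sum
        intro i _
        exact ((continuous_id.sub continuous_const).continuousOn).inv₀
          (fun u hu => hne i u (hsub hu))
      have h0mem : (0:ℝ) ∈ Set.Icc (T 1) (T x) := ⟨le_of_lt hT1, le_of_lt hTx⟩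
      obtain ⟨m, hm, hTm⟩ := intermediate_value_Icc' hxle1 Tcont h0mem
      have hmIcc : m ∈ Set.Icc x₀ 1 := hsub hm
      have hQm : Real.log |Q m| ≤ 0 := Real.log_nonpos (abs_nonneg _) (hbound m hmIcc)
      have h1 := key m hmIcc x hx
      rw [hTm] at h1
      have h2 := key m hmIcc 1 hx1
      rw [hTm, hlogQ1] at h2
      -- from h2 : -L ≤ log|Q m| - c/2 (1-m)^2  ⇒ c/2 (1-m)^2 ≤ L = c/2 D^2
      have h3 : c / 2 * (1 - m) ^ 2 ≤ c / 2 * D ^ 2 := by rw [hD2]; linarith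
      have h4 : (1 - m) ^ 2 ≤ D ^ 2 :=
        le_of_mul_le_mul_left (by linarith) (half_pos hcpos)
      have hm1 : 0 ≤ 1 - m := by linarith [hm.2]
      have hmD : 1 - m ≤ D := by
        have := Real.sqrt_le_sqrt h4
        rwa [Real.sqrt_sq hm1, Real.sqrt_sq hD0] at this
      have hmx : 0 ≤ m - x := by linarith [hm.1]
      have hmax : max 0 ((1 - x) - D) ≤ m - x := max_le hmx (by linarith)
      have hmax2 : (max 0 ((1 - x) - D)) ^ 2 ≤ (m - x) ^ 2 :=
        pow_le_pow_left₀ (le_max_left 0 _) hmax 2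
      have hstep : c / 2 * (max 0 ((1 - x) - D)) ^ 2 ≤ c / 2 * (m - x) ^ 2 :=
        mul_le_mul_of_nonneg_left hmax2 (le_of_lt (half_pos hcpos))
      have hsq' : c / 2 * (x - m) ^ 2 = c / 2 * (m - x) ^ 2 := by ring
      rw [mul_zero] at h1
      linarith
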